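/- Let g be a real semisimple Lie algebra with Iwasawa decomposition g = k ⊕ a ⊕ n, t an abelian subspace of k centralizing a, and q a Lie subalgebra of t ⊕ a ⊕ n. Let λ be a positive restricted root. If the orthogonal projection of q onto a ⊕ n contains g_λ and contains a vector H ∈ a with λ(H) ≠ 0, then g_λ ⊆ q. -/

import Mathlib

/-- The inner product `⟨X,Y⟩ = -B(X, θY)` associated with a Cartan involution `θ`. -/
noncomputable def cip (L : Type*) [LieRing L] [LieAlgebra ℝ L]
    (θ : L →ₗ⁅ℝ⁆ L) (X Y : L) : ℝ :=
  -(killingForm ℝ L X (θ Y))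

/-- Let `q ⊆ t ⊕ a ⊕ n` be a Lie subalgebra, where `t ⊆ k₀` is abelian and centralizes `a`,
and let `λ` be a positive restricted root.  If the orthogonal projection of `q` onto
`a ⊕ n` contains the root space `g_λ` (i.e. each `X ∈ g_λ` has some `T ∈ t` with
`T + X ∈ q`) and contains a vector `H ∈ a` with `λ(H) ≠ 0`, then `g_λ ⊆ q`. -/
theorem root_space_le_of_proj
    (L : Type*) [LieRing L] [LieAlgebra ℝ L] [FiniteDimensional ℝ L]
    [LieAlgebra.IsSemisimple ℝ L]
    (θ : L →ₗ⁅ℝ⁆ L) (hθ : Function.Involutive θ)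
    (hpos : ∀ X : L, X ≠ 0 → 0 < cip L θ X X)
    (t a n glam : Submodule ℝ L)
    (htab : ∀ T ∈ t, ∀ T' ∈ t, ⁅T, T'⁆ = 0)
    (hta : ∀ T ∈ t, ∀ H ∈ a, ⁅T, H⁆ = 0)
    (hglamn : glam ≤ n)
    (q : Submodule ℝ L)
    (hq : ∀ x ∈ q, ∀ y ∈ q, ⁅x, y⁆ ∈ q)
    (hqsub : q ≤ t ⊔ a ⊔ n)
    (lam : L →ₗ[ℝ] ℝ)
    (hglam : ∀ X ∈ glam, ∀ H ∈ a, ⁅H, X⁆ = lam H • X)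
    (htglam : ∀ T ∈ t, ∀ X ∈ glam, ⁅T, X⁆ ∈ glam)
    -- `ad T` is skew-adjoint for `T ∈ t ⊆ k`
    (hskew : ∀ T ∈ t, ∀ X Y : L, cip L θ ⁅T, X⁆ Y = -(cip L θ X ⁅T, Y⁆))
    (hproj : ∀ X ∈ glam, ∃ T ∈ t, T + X ∈ q)
    (H : L) (hHa : H ∈ a) (hlamH : lam H ≠ 0)
    (hHproj : ∃ T ∈ t, T + H ∈ q) :
    glam ≤ q := by
  obtain ⟨T₀, hT₀t, hT₀q⟩ := hHproj
  set c : ℝ := lam H with hc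
  -- the key operator
  set A : L →ₗ[ℝ] L := LieAlgebra.ad ℝ L T₀ + c • LinearMap.id with hAdef
  have hAapply : ∀ x : L, A x = ⁅T₀, x⁆ + c • x := by
    intro x; simp [hAdef, LieAlgebra.ad_apply]
  -- A maps glam into q
  have hAq : ∀ x ∈ glam, A x ∈ q := by
    intro x hx
    obtain ⟨T, hTt, hTq⟩ := hproj x hx
    have hbr : ⁅T₀ + H, T + x⁆ ∈ q := hq _ hT₀q _ hTq
    have : ⁅T₀ + H, T + x⁆ = ⁅T₀, x⁆ + c • x := by
      have hHT : ⁅H, T⁆ = 0 := by rw [← lie_skew, hta T hTt H hHa, neg_zero]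
      rw [add_lie, lie_add, lie_add, htab T₀ hT₀t T hTt, hHT, hglam x hx H hHa]
      simp
      rfl
    rw [hAapply]
    rwa [this] at hbr
  -- A maps glam into glam
  have hAglam : ∀ x ∈ glam, A x ∈ glam := by
    intro x hx
    rw [hAapply]
    exact glam.add_mem (htglam T₀ hT₀t x hx) (glam.smul_mem c hx)
  -- restricted map
  let f : glam →ₗ[ℝ] glam := A.restrict hAglam
  -- cip bilinearity helpers
  have cip_add_left : ∀ X Y Z : L, cip L θ (X + Y) Z = cip L θ X Z + cip L θ Y Z := by
    intro X Y Z; simp [cip]; ring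
  have cip_smul_left : ∀ (r : ℝ) (X Z : L), cip L θ (r • X) Z = r * cip L θ X Z := by
    intro r X Z; simp [cip]
  have cip_smul_right : ∀ (r : ℝ) (X Z : L), cip L θ X (r • Z) = r * cip L θ X Z := by
    intro r X Z; simp [cip]
  have cip_zero_left : ∀ Z : L, cip L θ 0 Z = 0 := by intro Z; simp [cip]
  have cip_zero_right : ∀ Z : L, cip L θ Z 0 = 0 := by intro Z; simp [cip]
  have cip_add_right : ∀ X Y Z : L, cip L θ Z (X + Y) = cip L θ Z X + cip L θ Z Y := by
    intro X Y Z; simp [cip]; ring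
  -- key identity
  have hkey : ∀ x : L, cip L θ (A x) x + cip L θ x (A x) = 2 * c * cip L θ x x := by
    intro x
    rw [hAapply, cip_add_left, cip_add_right, cip_smul_left, cip_smul_right,
      hskew T₀ hT₀t x x]
    ring
  -- injectivity of f
  have hinj : Function.Injective f := by
    rw [← LinearMap.ker_eq_bot, LinearMap.ker_eq_bot']
    intro m hm
    have hAm : A (m : L) = 0 := by
      have := congrArg (Subtype.val) hm
      simpa [f, LinearMap.restrict_apply] using this
    by_contra hne
    have hmne : (m : L) ≠ 0 := fun h => hne (Subtype.ext h)
    have hpos' := hpos (m : L) hmne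
    have h0 : cip L θ (m : L) (m : L) = 0 := by
      have := hkey (m : L)
      rw [hAm, cip_zero_left, cip_zero_right] at this
      have hc2 : (2 : ℝ) * c ≠ 0 := by
        simp [hc, hlamH]
        exact hlamH
      field_simp at this
      exact (mul_eq_zero.mp (by linarith : 2 * c * cip L θ (m : L) (m : L) = 0)).resolve_left hc2
    rw [h0] at hpos'
    exact lt_irrefl 0 hpos'
  have hsurj : Function.Surjective f := (LinearMap.injective_iff_surjective).mp hinj
  intro x hx
  obtain ⟨y, hy⟩ := hsurj ⟨x, hx⟩
  have : A (y : L) = x := by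
    have := congrArg (Subtype.val) hy
    simpa [f, LinearMap.restrict_apply] using this
  rw [← this]
  exact hAq (y : L) y.2
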